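/- General spectral bound for quasi-twisted codes: Let C ⊆ F_q^{mℓ} be a λ-QT code of index ℓ with nonempty eigenvalue set Ω̄ ⊆ Ω. Let P be any nonempty subset of Ω̄ and let d_P be a positive integer such that every nonzero codeword of the λ-constacyclic code D_P ⊆ F^m has Hamming weight at least d_P. Let V_P = ∩_{β∈P} V_β and let ℂ_P = ℂ(V_P) be its eigencode. Then every nonzero codeword of C has Hamming weight at least min{ d_P, d(ℂ_P) }. -/

import Mathlib

open Polynomial

open scoped Classical in
/-- Hamming weight: the number of nonzero coordinates. -/
noncomputable def wt {ι K : Type*} [Fintype ι] [Zero K] (c : ι → K) : ℕ :=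
  (Finset.univ.filter fun i => c i ≠ 0).card

/-- Minimum Hamming weight of a nonzero codeword of `S`, with `⊤` for the zero code. -/
noncomputable def minDist {ι K : Type*} [Fintype ι] [Zero K] (S : Set (ι → K)) : ℕ∞ :=
  sInf {n : ℕ∞ | ∃ c ∈ S, c ≠ 0 ∧ (wt c : ℕ∞) = n}

/-- The λ-constashift by ℓ positions on m×ℓ arrays: row 0 becomes λ times old last row. -/
def rho {Fq : Type*} [Field Fq] (m ℓ : ℕ) [NeZero m] (lam : Fq)
    (c : ZMod m × Fin ℓ → Fq) : ZMod m × Fin ℓ → Fq :=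
  fun p => (if p.1 = 0 then lam else 1) * c (p.1 - 1, p.2)

/-- Reduction of a vector of polynomials mod `X^m - λ`, written as an m×ℓ array. -/
noncomputable def arrOf {Fq : Type*} [Field Fq] (m ℓ : ℕ) [NeZero m] (lam : Fq)
    (v : Fin ℓ → Polynomial Fq) : ZMod m × Fin ℓ → Fq :=
  fun p => ((v p.2) %ₘ (Polynomial.X ^ m - Polynomial.C lam)).coeff (p.1).val

/-- The λ-constacyclic code of length `m` over `F` with zero set `P`. -/
def Dcode {F : Type*} [Field F] (m : ℕ) (P : Set F) : Set (Fin m → F) :=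
  {c | ∀ β ∈ P, ∑ k : Fin m, c k * β ^ (k : ℕ) = 0}

/-- The eigenspace of `β` for the polynomial matrix `G`: the null space of `G(β)`. -/
def Vspace {Fq F : Type*} [Field Fq] [Field F] [Algebra Fq F] (ℓ : ℕ)
    (G : Matrix (Fin ℓ) (Fin ℓ) (Polynomial Fq)) (β : F) : Set (Fin ℓ → F) :=
  {v | (G.map fun p => Polynomial.aeval β p).mulVec v = 0}

/-- The eigencode of a set of vectors `V ⊆ F^ℓ`. -/
def eigencode {Fq F : Type*} [Field Fq] [Field F] [Algebra Fq F] (ℓ : ℕ)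
    (V : Set (Fin ℓ → F)) : Set (Fin ℓ → Fq) :=
  {u | ∀ v ∈ V, ∑ j, v j * algebraMap Fq F (u j) = 0}


private lemma wt_le_wt' {ι κ K L : Type*} [Fintype ι] [Fintype κ] [Zero K] [Zero L]
    (f : ι → K) (g : κ → L) (t : ι → κ) (ht : Function.Injective t)
    (h : ∀ i, f i ≠ 0 → g (t i) ≠ 0) : wt f ≤ wt g := by
  classical
  unfold wt
  refine Finset.card_le_card_of_injOn t ?_ ?_
  · intro i hi
    simp only [Finset.mem_coe, Finset.mem_filter, Finset.mem_univ, true_and] at hi ⊢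
    exact h i hi
  · exact fun a _ b _ hab => ht hab

private noncomputable def zmodEquiv (m : ℕ) [NeZero m] : Fin m ≃ ZMod m where
  toFun k := ((k : ℕ) : ZMod m)
  invFun z := ⟨z.val, ZMod.val_lt z⟩
  left_inv k := by
    ext
    simp [ZMod.val_cast_of_lt k.isLt]
  right_inv z := ZMod.natCast_rightInverse z

private lemma zmodEquiv_val {m : ℕ} [NeZero m] (k : Fin m) :
    (zmodEquiv m k).val = (k : ℕ) := ZMod.val_cast_of_lt k.isLt


theorem general_spectral_bound
    {Fq F : Type*} [Field Fq] [Fintype Fq] [Field F] [Algebra Fq F]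
    (m ℓ : ℕ) [NeZero m] (hcop : Nat.Coprime m (Fintype.card Fq))
    (lam : Fq) (hlam : lam ≠ 0)
    (hsplit : IsSplittingField Fq F (X ^ m - C lam))
    (𝓒 : Submodule Fq (ZMod m × Fin ℓ → Fq))
    (hQT : ∀ c ∈ 𝓒, rho m ℓ lam c ∈ 𝓒)
    (G : Matrix (Fin ℓ) (Fin ℓ) (Polynomial Fq))
    (htri : ∀ i j, j < i → G i j = 0)
    (hdiv : ∀ j, G j j ∣ X ^ m - C lam)
    (hGen : ∀ v : Fin ℓ → Polynomial Fq,
      arrOf m ℓ lam v ∈ 𝓒 ↔ v ∈ Submodule.span (Polynomial Fq) (Set.range fun i j => G i j))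
    (Ωbar : Set F)
    (hΩbar : Ωbar = {x : F | x ^ m = algebraMap Fq F lam ∧ Polynomial.aeval x G.det = 0})
    (hne : Ωbar.Nonempty)
    (P : Set F) (hP : P.Nonempty) (hPΩ : P ⊆ Ωbar)
    (dP : ℕ) (hdP : 0 < dP)
    (hDP : ∀ c ∈ Dcode (F := F) m P, c ≠ 0 → dP ≤ wt c)
    (VP : Set (Fin ℓ → F)) (hVP : VP = ⋂ β ∈ P, Vspace ℓ G β) :
    ∀ c ∈ 𝓒, c ≠ 0 →
      min (dP : ℕ∞) (minDist (eigencode (Fq := Fq) ℓ VP)) ≤ (wt c : ℕ∞) := by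
  classical
  intro c hc hc0
  have hm : 0 < m := Nat.pos_of_ne_zero (NeZero.ne m)
  have hmonic : (X ^ m - C lam).Monic := monic_X_pow_sub_C lam hm.ne'
  -- the polynomial vector representing c
  set v : Fin ℓ → Polynomial Fq := fun j => ∑ k : ZMod m, C (c (k, j)) * X ^ k.val with hvdef
  have hdegv : ∀ j, (v j).degree < (X ^ m - C lam).degree := by
    intro j
    rw [degree_X_pow_sub_C hm]
    refine lt_of_le_of_lt (Polynomial.degree_sum_le _ _) ?_
    rw [Finset.sup_lt_iff (by exact_mod_cast WithBot.bot_lt_coe m)]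
    intro k _
    exact lt_of_le_of_lt (degree_C_mul_X_pow_le _ _) (by exact_mod_cast ZMod.val_lt k)
  have harr : arrOf m ℓ lam v = c := by
    funext p
    unfold arrOf
    rw [(Polynomial.modByMonic_eq_self_iff hmonic).mpr (hdegv p.2), hvdef]
    rw [Polynomial.finset_sum_coeff]
    rw [Finset.sum_eq_single p.1]
    · simp [Polynomial.coeff_C_mul, Polynomial.coeff_X_pow]
    · intro k _ hk
      have hne' : p.1.val ≠ k.val := fun h => hk (ZMod.val_injective m h.symm)
      simp [Polynomial.coeff_C_mul, Polynomial.coeff_X_pow, hne']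
    · intro h
      exact absurd (Finset.mem_univ p.1) h
  have hvspan : v ∈ Submodule.span (Polynomial Fq) (Set.range fun i j => G i j) :=
    (hGen v).mp (harr ▸ hc)
  -- key orthogonality
  have key : ∀ (β : F), ∀ w ∈ Vspace ℓ G β,
      ∀ v' ∈ Submodule.span (Polynomial Fq) (Set.range fun i j => G i j),
        ∑ j, Polynomial.aeval β (v' j) * w j = 0 := by
    intro β w hw v' hv'
    induction hv' using Submodule.span_induction with
    | mem x hx =>
      obtain ⟨i, rfl⟩ := hx
      have h0 := congrFun hw i
      simpa [Matrix.mulVec, Matrix.map_apply, dotProduct] using h0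
    | zero => simp
    | add x y _ _ hx hy =>
      simp only [Pi.add_apply, map_add, add_mul, Finset.sum_add_distrib, hx, hy, add_zero]
    | smul p x _ hx =>
      simp only [Pi.smul_apply, smul_eq_mul, map_mul, mul_assoc, ← Finset.mul_sum, hx, mul_zero]
  have haeval : ∀ (β : F) (j : Fin ℓ),
      Polynomial.aeval β (v j) = ∑ k : ZMod m, algebraMap Fq F (c (k, j)) * β ^ k.val := by
    intro β j
    rw [hvdef]
    simp [map_sum]
  by_cases hcase : ∀ w ∈ VP, ∀ k : ZMod m, ∑ j, algebraMap Fq F (c (k, j)) * w j = 0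
  · -- every row of c lies in the eigencode
    have hcex : ∃ p, c p ≠ 0 := by
      by_contra h
      push_neg at h
      exact hc0 (funext h)
    obtain ⟨⟨k₀, j₀⟩, hcj⟩ := hcex
    set r : Fin ℓ → Fq := fun j => c (k₀, j) with hrdef
    have hr0 : r ≠ 0 := fun h => hcj (by simpa [hrdef] using congrFun h j₀)
    have hrE : r ∈ eigencode (Fq := Fq) ℓ VP := by
      intro w hw
      have h0 := hcase w hw k₀
      calc ∑ j, w j * algebraMap Fq F (r j)
          = ∑ j, algebraMap Fq F (c (k₀, j)) * w j := by
            refine Finset.sum_congr rfl fun j _ => ?_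
            rw [hrdef, mul_comm]
        _ = 0 := h0
    have h1 : minDist (eigencode (Fq := Fq) ℓ VP) ≤ (wt r : ℕ∞) :=
      sInf_le ⟨r, hrE, hr0, rfl⟩
    have h2 : wt r ≤ wt c := by
      refine wt_le_wt' r c (fun j => (k₀, j)) (fun a b hab => (Prod.mk.injEq _ _ _ _ ▸ hab).2) ?_
      intro j hj
      simpa [hrdef] using hj
    exact le_trans (min_le_right _ _) (h1.trans (by exact_mod_cast h2))
  · push_neg at hcase
    obtain ⟨w, hwVP, k', hk'⟩ := hcase
    set a : Fin m → F := fun k => ∑ j, algebraMap Fq F (c (((k : ℕ) : ZMod m), j)) * w j with hadef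
    have haD : a ∈ Dcode (F := F) m P := by
      intro β hβ
      have hwβ : w ∈ Vspace ℓ G β := by
        rw [hVP] at hwVP
        exact Set.mem_iInter₂.mp hwVP β hβ
      have hk := key β w hwβ v hvspan
      calc ∑ k : Fin m, a k * β ^ (k : ℕ)
          = ∑ k : ZMod m, (∑ j, algebraMap Fq F (c (k, j)) * w j) * β ^ k.val := by
            refine Fintype.sum_equiv (zmodEquiv m) _ _ fun k => ?_
            rw [hadef]
            simp only [zmodEquiv_val]
            rfl
        _ = ∑ k : ZMod m, ∑ j, (algebraMap Fq F (c (k, j)) * w j) * β ^ k.val := by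
            simp [Finset.sum_mul]
        _ = ∑ j, ∑ k : ZMod m, (algebraMap Fq F (c (k, j)) * w j) * β ^ k.val :=
            Finset.sum_comm
        _ = ∑ j, Polynomial.aeval β (v j) * w j := by
            refine Finset.sum_congr rfl fun j _ => ?_
            rw [haeval β j, Finset.sum_mul]
            refine Finset.sum_congr rfl fun k _ => ?_
            ring
        _ = 0 := hk
    have ha0 : a ≠ 0 := by
      intro h
      apply hk'
      have h0 := congrFun h ⟨k'.val, ZMod.val_lt k'⟩
      rw [hadef] at h0
      simpa [ZMod.natCast_rightInverse k'] using h0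
    have h1 : dP ≤ wt a := hDP a haD ha0
    have hne0 : Nonempty (Fin ℓ) := by
      rcases isEmpty_or_nonempty (Fin ℓ) with hE | hN
      · exact absurd (by simp) hk'
      · exact hN
    have h2 : wt a ≤ wt c := by
      refine wt_le_wt' a c
        (fun k => (((k : ℕ) : ZMod m),
          if h : ∃ j, c (((k : ℕ) : ZMod m), j) ≠ 0 then h.choose
          else Classical.arbitrary (Fin ℓ))) ?_ ?_
      · intro x y hxy
        have h1' := congrArg Prod.fst hxy
        simp only at h1'
        have : (x : ℕ) = (y : ℕ) := by
          have := congrArg ZMod.val h1'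
          rwa [ZMod.val_cast_of_lt x.isLt, ZMod.val_cast_of_lt y.isLt] at this
        exact Fin.ext this
      · intro k hk
        have hex : ∃ j, c (((k : ℕ) : ZMod m), j) ≠ 0 := by
          by_contra hno
          push_neg at hno
          apply hk
          rw [hadef]
          simp only
          refine Finset.sum_eq_zero fun j _ => ?_
          rw [hno j, map_zero, zero_mul]
        simpa [dif_pos hex] using hex.choose_spec
    exact le_trans (min_le_left _ _) (by exact_mod_cast h1.trans h2)
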